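/- If a metric space X is the union of two subsets Y and Z, then dim_N X = max(dim_N Y, dim_N Z). -/

import Mathlib

open Metric Set

/-- `X` has Nagata dimension at most `n` (witnessed by some constant `c > 0`):
for every `s > 0` there is a covering by sets of diameter `≤ c * s` such that every
set of diameter `≤ s` meets at most `n + 1` members of the covering. -/
def NagataProp (X : Type*) [MetricSpace X] (n : ℕ) : Prop :=
  ∃ c : ℝ, 0 < c ∧ ∀ s : ℝ, 0 < s → ∃ 𝓑 : Set (Set X),
    (⋃₀ 𝓑 = univ) ∧
    (∀ B ∈ 𝓑, EMetric.diam B ≤ ENNReal.ofReal (c * s)) ∧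
    (∀ E : Set X, EMetric.diam E ≤ ENNReal.ofReal s →
      ∃ T : Finset (Set X), T.card ≤ n + 1 ∧
        ∀ B ∈ 𝓑, (B ∩ E).Nonempty → B ∈ T)

/-- The Nagata (Assouad–Nagata) dimension of a metric space, as an element of `ℕ∞`. -/
noncomputable def nagataDim (X : Type*) [MetricSpace X] : ℕ∞ :=
  sInf {k : ℕ∞ | ∃ n : ℕ, k = n ∧ NagataProp X n}

section Aux

variable {X : Type*} [MetricSpace X]

lemma dist_le_of_ediam {A : Set X} {d : ℝ} (hd : 0 ≤ d)
    (h : EMetric.diam A ≤ ENNReal.ofReal d) {x y : X} (hx : x ∈ A) (hy : y ∈ A) :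
    dist x y ≤ d := by
  have h2 := (EMetric.edist_le_diam_of_mem hx hy).trans h
  rwa [edist_dist, ENNReal.ofReal_le_ofReal_iff hd] at h2

lemma nagataProp_mono {n m : ℕ} (hnm : n ≤ m) (h : NagataProp X n) : NagataProp X m := by
  obtain ⟨c, hc, H⟩ := h
  refine ⟨c, hc, fun s hs => ?_⟩
  obtain ⟨𝓑, h1, h2, h3⟩ := H s hs
  refine ⟨𝓑, h1, h2, fun E hE => ?_⟩
  obtain ⟨T, hT1, hT2⟩ := h3 E hE
  exact ⟨T, hT1.trans (by omega), hT2⟩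

lemma nagataProp_subtype (Y : Set X) {n : ℕ} (h : NagataProp X n) : NagataProp Y n := by
  classical
  obtain ⟨c, hc, H⟩ := h
  refine ⟨c, hc, fun s hs => ?_⟩
  obtain ⟨𝓑, h1, h2, h3⟩ := H s hs
  refine ⟨(fun B => ((↑) : Y → X) ⁻¹' B) '' 𝓑, ?_, ?_, ?_⟩
  · ext y
    simp only [mem_sUnion, mem_univ, iff_true]
    have : (y : X) ∈ ⋃₀ 𝓑 := h1 ▸ mem_univ _
    obtain ⟨B, hB, hyB⟩ := this
    exact ⟨_, ⟨B, hB, rfl⟩, hyB⟩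
  · rintro _ ⟨B, hB, rfl⟩
    calc EMetric.diam (((↑) : Y → X) ⁻¹' B)
        = EMetric.diam (((↑) : Y → X) '' (((↑) : Y → X) ⁻¹' B)) :=
          (isometry_subtype_coe.ediam_image _).symm
      _ ≤ EMetric.diam B := EMetric.diam_mono (image_preimage_subset _ _)
      _ ≤ _ := h2 B hB
  · intro E hE
    have hE' : EMetric.diam (((↑) : Y → X) '' E) ≤ ENNReal.ofReal s := by
      exact (isometry_subtype_coe.ediam_image E).le.trans hE
    obtain ⟨T, hT1, hT2⟩ := h3 _ hE'
    refine ⟨T.image (fun B => ((↑) : Y → X) ⁻¹' B), Finset.card_image_le.trans hT1, ?_⟩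
    rintro _ ⟨B, hB, rfl⟩ ⟨y, hy1, hy2⟩
    exact Finset.mem_image_of_mem _ (hT2 B hB ⟨y, hy1, mem_image_of_mem _ hy2⟩)

/-- Colored families characterization, relative to a subset `Y` of `X`. -/
def ColoredOn (Y : Set X) (n : ℕ) : Prop :=
  ∃ c : ℝ, 0 < c ∧ ∀ s : ℝ, 0 < s → ∃ 𝓒 : Fin (n+1) → Set (Set X),
    (∀ x ∈ Y, ∃ i, ∃ A ∈ 𝓒 i, x ∈ A) ∧
    (∀ i, ∀ A ∈ 𝓒 i, EMetric.diam A ≤ ENNReal.ofReal (c * s)) ∧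
    (∀ i, ∀ A ∈ 𝓒 i, ∀ A' ∈ 𝓒 i, A ≠ A' → ∀ x ∈ A, ∀ y ∈ A', s ≤ dist x y)

lemma nagataProp_coloredOn_univ {n : ℕ} (h : NagataProp X n) :
    ColoredOn (univ : Set X) n := by
  classical
  obtain ⟨c, hc, H⟩ := h
  refine ⟨2*n + 2*c*(n+1), by positivity, fun s hs => ?_⟩
  obtain ⟨𝓑, hcov, hdiam, hmult⟩ := H (2*(n+1)*s) (by positivity)
  set sig : ℕ → X → Set (Set X) :=
    fun k x => {B | B ∈ 𝓑 ∧ ∃ b ∈ B, dist x b ≤ (k : ℝ) * s} with hsigdef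
  have sig_mono : ∀ (k l : ℕ) (x : X), k ≤ l → sig k x ⊆ sig l x := by
    intro k l x hkl B hB
    obtain ⟨hB1, b, hb1, hb2⟩ := hB
    refine ⟨hB1, b, hb1, hb2.trans ?_⟩
    apply mul_le_mul_of_nonneg_right _ hs.le
    exact_mod_cast hkl
  have sig0 : ∀ x : X, (sig 0 x).Nonempty := by
    intro x
    have : x ∈ ⋃₀ 𝓑 := by rw [hcov]; trivial
    obtain ⟨B, hB, hxB⟩ := this
    exact ⟨B, hB, x, hxB, by simp⟩
  have sigfin : ∀ x : X, ∃ T : Finset (Set X), T.card ≤ n + 1 ∧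
      ∀ k ≤ n + 1, sig k x ⊆ ↑T := by
    intro x
    have hE : EMetric.diam (closedBall x ((n+1)*s)) ≤ ENNReal.ofReal (2*(n+1)*s) := by
      apply EMetric.diam_le
      intro a ha b hb
      rw [edist_dist]
      apply ENNReal.ofReal_le_ofReal
      have h1 : dist a x ≤ (n+1)*s := mem_closedBall.mp ha
      have h2 : dist b x ≤ (n+1)*s := mem_closedBall.mp hb
      have h3 : dist a b ≤ dist a x + dist x b := dist_triangle a x b
      have h4 : dist x b = dist b x := dist_comm x b
      linarith
    obtain ⟨T, hT1, hT2⟩ := hmult _ hE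
    refine ⟨T, hT1, fun k hk B hB => hT2 B hB.1 ?_⟩
    obtain ⟨b, hbB, hxb⟩ := hB.2
    refine ⟨b, hbB, mem_closedBall.mpr ?_⟩
    rw [dist_comm]
    refine hxb.trans (mul_le_mul_of_nonneg_right ?_ hs.le)
    exact_mod_cast hk
  have pig : ∀ x : X, ∃ k, k ≤ n ∧ sig k x = sig (k+1) x := by
    intro x
    by_contra hcon
    push_neg at hcon
    obtain ⟨T, hT1, hT2⟩ := sigfin x
    have hfin : ∀ k, k ≤ n + 1 → (sig k x).Finite :=
      fun k hk => T.finite_toSet.subset (hT2 k hk)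
    have key : ∀ k, k ≤ n + 1 → k + 1 ≤ (sig k x).ncard := by
      intro k
      induction k with
      | zero =>
        intro _
        have := (Set.ncard_pos (hfin 0 (by omega))).mpr (sig0 x)
        omega
      | succ m ih =>
        intro hm
        have h1 : m + 1 ≤ (sig m x).ncard := ih (by omega)
        have h2 : sig m x ⊂ sig (m+1) x :=
          (sig_mono m (m+1) x (by omega)).ssubset_of_ne (hcon m (by omega))
        have h3 := Set.ncard_lt_ncard h2 (hfin (m+1) hm)
        omega
    have h3 := key (n+1) le_rfl
    have h4 : (sig (n+1) x).ncard ≤ T.card := by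
      rw [← Set.ncard_coe_finset T]
      exact Set.ncard_le_ncard (hT2 (n+1) le_rfl) T.finite_toSet
    omega
  choose kk hk1 hk2 using pig
  refine ⟨fun i => {A | ∃ σ₀ : Set (Set X),
      A = {y | kk y = i.val ∧ sig i.val y = σ₀} ∧ A.Nonempty}, ?_, ?_, ?_⟩
  · intro x _
    refine ⟨⟨kk x, Nat.lt_succ_of_le (hk1 x)⟩,
      {y | kk y = kk x ∧ sig (kk x) y = sig (kk x) x}, ⟨sig (kk x) x, rfl, ⟨x, rfl, rfl⟩⟩,
      rfl, rfl⟩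
  · rintro i A ⟨σ₀, rfl, hne⟩
    apply EMetric.diam_le
    rintro x ⟨hkx, hsx⟩ y ⟨hky, hsy⟩
    rw [edist_dist]
    apply ENNReal.ofReal_le_ofReal
    have hσne : σ₀.Nonempty := hsx ▸ ((sig0 x).mono (sig_mono 0 i.val x (Nat.zero_le _)))
    obtain ⟨B, hB⟩ := hσne
    have hBx : B ∈ sig i.val x := by rw [hsx]; exact hB
    have hBy : B ∈ sig i.val y := by rw [hsy]; exact hB
    obtain ⟨hB𝓑, b, hbB, hxb⟩ := hBx
    obtain ⟨-, b', hb'B, hyb'⟩ := hBy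
    have hbb' : dist b b' ≤ c * (2*(n+1)*s) :=
      dist_le_of_ediam (by positivity) (hdiam B hB𝓑) hbB hb'B
    have hi : (i.val : ℝ) ≤ (n : ℝ) := by exact_mod_cast Nat.lt_succ_iff.mp i.isLt
    have h1 : dist x b ≤ (n : ℝ) * s := hxb.trans (mul_le_mul_of_nonneg_right hi hs.le)
    have h2 : dist y b' ≤ (n : ℝ) * s := hyb'.trans (mul_le_mul_of_nonneg_right hi hs.le)
    have h3 := dist_triangle4 x b b' y
    have h4 : dist b' y = dist y b' := dist_comm b' y
    nlinarith
  · rintro i A ⟨σ₀, rfl, -⟩ A' ⟨σ₁, rfl, -⟩ hne x hx y hy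
    by_contra hlt
    push_neg at hlt
    apply hne
    obtain ⟨hkx, hsx⟩ := hx
    obtain ⟨hky, hsy⟩ := hy
    suffices hσ : σ₀ = σ₁ by rw [hσ]
    have step : ∀ u v : X, kk v = i.val → dist u v < s → sig i.val u ⊆ sig i.val v := by
      intro u v hkv hd B hB
      obtain ⟨hB𝓑, b, hbB, hub⟩ := hB
      have hvb : dist v b ≤ ((i.val + 1 : ℕ) : ℝ) * s := by
        have t1 : dist v b ≤ dist v u + dist u b := dist_triangle v u b
        have t2 : dist v u = dist u v := dist_comm v u
        push_cast
        have : ((i.val : ℝ) + 1) * s = (i.val : ℝ) * s + s := by ring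
        rw [this]
        linarith
      have hmem : B ∈ sig (i.val + 1) v := ⟨hB𝓑, b, hbB, hvb⟩
      have heq : sig i.val v = sig (i.val + 1) v := by rw [← hkv]; exact hk2 v
      rw [heq]; exact hmem
    rw [← hsx, ← hsy]
    exact subset_antisymm (step x y hky hlt) (step y x hkx (by rwa [dist_comm]))

lemma coloredOn_of_subtype (Y : Set X) {n : ℕ}
    (h : ColoredOn (univ : Set Y) n) : ColoredOn Y n := by
  obtain ⟨c, hc, H⟩ := h
  refine ⟨c, hc, fun s hs => ?_⟩
  obtain ⟨𝓒, h1, h2, h3⟩ := H s hs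
  refine ⟨fun i => (fun A => ((↑) : Y → X) '' A) '' 𝓒 i, ?_, ?_, ?_⟩
  · intro x hx
    obtain ⟨i, A, hA, hxA⟩ := h1 ⟨x, hx⟩ (mem_univ _)
    exact ⟨i, _, ⟨A, hA, rfl⟩, mem_image_of_mem _ hxA⟩
  · rintro i _ ⟨A, hA, rfl⟩
    exact (isometry_subtype_coe.ediam_image A).le.trans (h2 i A hA)
  · rintro i _ ⟨A, hA, rfl⟩ _ ⟨A', hA', rfl⟩ hne _ ⟨a, ha, rfl⟩ _ ⟨a', ha', rfl⟩
    have hAA' : A ≠ A' := by rintro rfl; exact hne rfl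
    have := h3 i A hA A' hA' hAA' a ha a' ha'
    rwa [Subtype.dist_eq] at this

lemma coloredOn_union {Y Z : Set X} {n : ℕ}
    (hY : ColoredOn Y n) (hZ : ColoredOn Z n) : ColoredOn (Y ∪ Z) n := by
  classical
  obtain ⟨cY, hcY, HY⟩ := hY
  obtain ⟨cZ, hcZ, HZ⟩ := hZ
  refine ⟨cZ*(2*cY+3) + 2*cY + 2, by positivity, fun s hs => ?_⟩
  obtain ⟨𝓤, hU1, hU2, hU3⟩ := HY s hs
  obtain ⟨𝓥, hV1, hV2, hV3⟩ := HZ ((2*cY+3)*s) (by positivity)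
  set close : Set X → Set X → Prop := fun U V => ∃ u ∈ U, ∃ v ∈ V, dist u v ≤ s with hclosedef
  set sat : Fin (n+1) → Set X → Set X :=
    fun i V => V ∪ ⋃₀ {U | U ∈ 𝓤 i ∧ close U V} with hsatdef
  have key : ∀ i V, V ∈ 𝓥 i → ∀ x ∈ sat i V, ∃ v ∈ V, dist x v ≤ cY * s + s := by
    intro i V hV x hx
    rcases hx with hxV | hxU
    · exact ⟨x, hxV, by simp; nlinarith⟩
    · obtain ⟨U, ⟨hU𝓤, u, huU, v, hvV, huv⟩, hxU⟩ := hxU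
      have hxu : dist x u ≤ cY * s :=
        dist_le_of_ediam (by positivity) (hU2 i U hU𝓤) hxU huU
      have := dist_triangle x u v
      exact ⟨v, hvV, by linarith⟩
  refine ⟨fun i => {W | (∃ V ∈ 𝓥 i, W = sat i V) ∨
      (W ∈ 𝓤 i ∧ ∀ V ∈ 𝓥 i, ¬ close W V)}, ?_, ?_, ?_⟩
  · rintro x (hxY | hxZ)
    · obtain ⟨i, U, hU, hxU⟩ := hU1 x hxY
      by_cases hcl : ∃ V ∈ 𝓥 i, close U V
      · obtain ⟨V, hV, hUV⟩ := hcl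
        exact ⟨i, sat i V, Or.inl ⟨V, hV, rfl⟩, Or.inr ⟨U, ⟨hU, hUV⟩, hxU⟩⟩
      · push_neg at hcl
        exact ⟨i, U, Or.inr ⟨hU, hcl⟩, hxU⟩
    · obtain ⟨i, V, hV, hxV⟩ := hV1 x hxZ
      exact ⟨i, sat i V, Or.inl ⟨V, hV, rfl⟩, Or.inl hxV⟩
  · rintro i W (⟨V, hV, rfl⟩ | ⟨hW𝓤, -⟩)
    · apply EMetric.diam_le
      intro x hx y hy
      rw [edist_dist]
      apply ENNReal.ofReal_le_ofReal
      obtain ⟨v, hv, hxv⟩ := key i V hV x hx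
      obtain ⟨v', hv', hyv'⟩ := key i V hV y hy
      have hvv' : dist v v' ≤ cZ * ((2*cY+3)*s) :=
        dist_le_of_ediam (by positivity) (hV2 i V hV) hv hv'
      have h3 := dist_triangle4 x v v' y
      have h4 : dist v' y = dist y v' := dist_comm v' y
      nlinarith
    · refine (hU2 i W hW𝓤).trans (ENNReal.ofReal_le_ofReal ?_)
      nlinarith [mul_pos (mul_pos hcZ (by linarith : (0:ℝ) < 2*cY+3)) hs,
        mul_pos hcY hs, hs]
  · rintro i W hW W' hW' hne x hx y hy
    rcases hW with ⟨V, hV, rfl⟩ | ⟨hW𝓤, hWfar⟩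
    · rcases hW' with ⟨V', hV', rfl⟩ | ⟨hW'𝓤, hW'far⟩
      · have hVV' : V ≠ V' := by rintro rfl; exact hne rfl
        by_contra hlt
        push_neg at hlt
        obtain ⟨v, hv, hxv⟩ := key i V hV x hx
        obtain ⟨v', hv', hyv'⟩ := key i V' hV' y hy
        have hsep := hV3 i V hV V' hV' hVV' v hv v' hv'
        have h3 := dist_triangle4 v x y v'
        have h4 : dist v x = dist x v := dist_comm v x
        nlinarith
      · rcases hx with hxV | ⟨U', ⟨hU'𝓤, hU'cl⟩, hxU'⟩
        · by_contra hlt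
          push_neg at hlt
          exact hW'far V hV ⟨y, hy, x, hxV, by rw [dist_comm]; exact hlt.le⟩
        · have hUU' : U' ≠ W' := by rintro rfl; exact hW'far V hV hU'cl
          exact hU3 i U' hU'𝓤 W' hW'𝓤 hUU' x hxU' y hy
    · rcases hW' with ⟨V, hV, rfl⟩ | ⟨hW'𝓤, hW'far⟩
      · rcases hy with hyV | ⟨U', ⟨hU'𝓤, hU'cl⟩, hyU'⟩
        · by_contra hlt
          push_neg at hlt
          exact hWfar V hV ⟨x, hx, y, hyV, hlt.le⟩
        · have hUU' : W ≠ U' := by rintro rfl; exact hWfar V hV hU'cl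
          exact hU3 i W hW𝓤 U' hU'𝓤 hUU' x hx y hyU'
      · exact hU3 i W hW𝓤 W' hW'𝓤 hne x hx y hy

lemma nagataProp_of_coloredOn_univ {n : ℕ} (h : ColoredOn (univ : Set X) n) :
    NagataProp X n := by
  classical
  obtain ⟨c, hc, H⟩ := h
  refine ⟨2*c, by positivity, fun s hs => ?_⟩
  obtain ⟨𝓒, h1, h2, h3⟩ := H (2*s) (by positivity)
  refine ⟨⋃ i, 𝓒 i, ?_, ?_, ?_⟩
  · ext x
    simp only [mem_sUnion, mem_univ, iff_true]
    obtain ⟨i, A, hA, hxA⟩ := h1 x (mem_univ x)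
    exact ⟨A, mem_iUnion.mpr ⟨i, hA⟩, hxA⟩
  · intro B hB
    obtain ⟨i, hBi⟩ := mem_iUnion.mp hB
    refine (h2 i B hBi).trans (ENNReal.ofReal_le_ofReal ?_)
    nlinarith
  · intro E hE
    have uniq : ∀ i, ∀ B ∈ 𝓒 i, ∀ B' ∈ 𝓒 i,
        (B ∩ E).Nonempty → (B' ∩ E).Nonempty → B = B' := by
      rintro i B hB B' hB' ⟨x, hxB, hxE⟩ ⟨y, hyB', hyE⟩
      by_contra hne
      have hsep := h3 i B hB B' hB' hne x hxB y hyB'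
      have hd : dist x y ≤ s := dist_le_of_ediam hs.le hE hxE hyE
      linarith
    set pick : Fin (n+1) → Set X :=
      fun i => if hex : ∃ B, B ∈ 𝓒 i ∧ (B ∩ E).Nonempty then hex.choose else ∅ with hpickdef
    have hpick : ∀ i, ∀ B ∈ 𝓒 i, (B ∩ E).Nonempty → pick i = B := by
      intro i B hB hBE
      have hex : ∃ B, B ∈ 𝓒 i ∧ (B ∩ E).Nonempty := ⟨B, hB, hBE⟩
      rw [hpickdef]
      simp only [dif_pos hex]
      exact uniq i _ hex.choose_spec.1 B hB hex.choose_spec.2 hBE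
    refine ⟨Finset.image pick Finset.univ, Finset.card_image_le.trans (by simp), ?_⟩
    intro B hB hBE
    obtain ⟨i, hBi⟩ := mem_iUnion.mp hB
    rw [← hpick i B hBi hBE]
    exact Finset.mem_image_of_mem _ (Finset.mem_univ i)

lemma nagataDim_le_of_prop {n : ℕ} (h : NagataProp X n) : nagataDim X ≤ n :=
  sInf_le ⟨n, rfl, h⟩

lemma exists_prop_of_nagataDim_ne_top (h : nagataDim X ≠ ⊤) :
    ∃ n : ℕ, nagataDim X = n ∧ NagataProp X n := by
  have hne : {k : ℕ∞ | ∃ n : ℕ, k = n ∧ NagataProp X n}.Nonempty := by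
    by_contra hemp
    rw [not_nonempty_iff_eq_empty] at hemp
    exact h (by rw [nagataDim, hemp, sInf_empty])
  obtain ⟨k, n₁, rfl, hP1⟩ := hne
  have hPne : {m : ℕ | NagataProp X m}.Nonempty := ⟨n₁, hP1⟩
  refine ⟨sInf {m : ℕ | NagataProp X m}, ?_, Nat.sInf_mem hPne⟩
  apply le_antisymm
  · exact sInf_le ⟨_, rfl, Nat.sInf_mem hPne⟩
  · apply le_sInf
    rintro k ⟨m, rfl, hm⟩
    exact_mod_cast Nat.sInf_le hm

lemma nagataDim_subtype_le (Y : Set X) : nagataDim Y ≤ nagataDim X := by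
  rcases eq_or_ne (nagataDim X) ⊤ with h | h
  · exact h ▸ le_top
  · obtain ⟨n, hn, hP⟩ := exists_prop_of_nagataDim_ne_top h
    rw [hn]
    exact nagataDim_le_of_prop (nagataProp_subtype Y hP)

end Aux

theorem nagataDim_union {X : Type*} [MetricSpace X] (Y Z : Set X) (hYZ : Y ∪ Z = univ) :
    nagataDim X = max (nagataDim Y) (nagataDim Z) := by
  apply le_antisymm
  · rcases eq_or_ne (max (nagataDim Y) (nagataDim Z)) ⊤ with h | h
    · rw [h]; exact le_top
    · have hYt : nagataDim Y ≠ ⊤ := by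
        intro hh
        exact h (top_le_iff.mp (hh ▸ le_max_left (nagataDim Y) (nagataDim Z)))
      have hZt : nagataDim Z ≠ ⊤ := by
        intro hh
        exact h (top_le_iff.mp (hh ▸ le_max_right (nagataDim Y) (nagataDim Z)))
      obtain ⟨nY, hnY, hPY⟩ := exists_prop_of_nagataDim_ne_top hYt
      obtain ⟨nZ, hnZ, hPZ⟩ := exists_prop_of_nagataDim_ne_top hZt
      have hPY' : NagataProp Y (max nY nZ) := nagataProp_mono (le_max_left _ _) hPY
      have hPZ' : NagataProp Z (max nY nZ) := nagataProp_mono (le_max_right _ _) hPZ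
      have hCY : ColoredOn Y (max nY nZ) :=
        coloredOn_of_subtype Y (nagataProp_coloredOn_univ hPY')
      have hCZ : ColoredOn Z (max nY nZ) :=
        coloredOn_of_subtype Z (nagataProp_coloredOn_univ hPZ')
      have hC : ColoredOn (Y ∪ Z) (max nY nZ) := coloredOn_union hCY hCZ
      rw [hYZ] at hC
      have hPX : NagataProp X (max nY nZ) := nagataProp_of_coloredOn_univ hC
      refine (nagataDim_le_of_prop hPX).trans ?_
      rw [hnY, hnZ]
      rcases le_total nY nZ with hh | hh
      · rw [max_eq_right hh]
        exact le_max_right _ _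
      · rw [max_eq_left hh]
        exact le_max_left _ _
  · exact max_le (nagataDim_subtype_le Y) (nagataDim_subtype_le Z)
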